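/- Let A be a C*-algebra, n ≥ 2, and [a_{ij}] a hermitian matrix in Mₙ(A). Then [a_{ij}] is conditionally positive if and only if there exists an index m with 1 ≤ m ≤ n such that the matrix [a_{ij} − a_{im} − a_{mj} + a_{mm}] is a positive element of the C*-algebra Mₙ(A). -/

import Mathlib

open Matrix
/-- A matrix `[aᵢⱼ] ∈ Mₙ(A)` is conditionally positive if `∑ᵢⱼ aᵢ* aᵢⱼ aⱼ ≥ 0` for all
`a₁, …, aₙ ∈ A` with `∑ᵢ aᵢ = 0`. -/
def Matrix.IsCondPos {A : Type*} {n : ℕ} [NonUnitalCStarAlgebra A] [PartialOrder A]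
    (M : Matrix (Fin n) (Fin n) A) : Prop :=
  ∀ a : Fin n → A, (∑ i, a i) = 0 → 0 ≤ ∑ i, ∑ j, star (a i) * M i j * a j

/-- A matrix is a positive element of the C*-algebra `Mₙ(A)` iff it factors as `Bᴴ * B`
(the standard characterization of positive elements in a C*-algebra). -/
def Matrix.IsPosElem {A : Type*} {n : ℕ} [NonUnitalCStarAlgebra A]
    (M : Matrix (Fin n) (Fin n) A) : Prop :=
  ∃ B : Matrix (Fin n) (Fin n) A, M = Bᴴ * B

set_option linter.unusedSectionVars false
set_option maxHeartbeats 1000000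

open WithCStarModule CStarModule Matrix

namespace CondPosAux

variable {A : Type*} [NonUnitalCStarAlgebra A] [PartialOrder A] [StarOrderedRing A] {n : ℕ}

/-- Type synonym for matrices over `A`, to carry the C*-algebra structure. -/
def CSM (n : ℕ) (A : Type*) := Matrix (Fin n) (Fin n) A

namespace CSM

def ofM : Matrix (Fin n) (Fin n) A ≃ CSM n A := Equiv.refl _

instance : NonUnitalRing (CSM n A) := inferInstanceAs (NonUnitalRing (Matrix (Fin n) (Fin n) A))
instance : StarRing (CSM n A) := inferInstanceAs (StarRing (Matrix (Fin n) (Fin n) A))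
instance : Module ℂ (CSM n A) := inferInstanceAs (Module ℂ (Matrix (Fin n) (Fin n) A))
instance : SMulCommClass ℂ (CSM n A) (CSM n A) :=
  inferInstanceAs (SMulCommClass ℂ (Matrix (Fin n) (Fin n) A) (Matrix (Fin n) (Fin n) A))
instance : IsScalarTower ℂ (CSM n A) (CSM n A) :=
  inferInstanceAs (IsScalarTower ℂ (Matrix (Fin n) (Fin n) A) (Matrix (Fin n) (Fin n) A))
instance : StarModule ℂ (CSM n A) :=
  inferInstanceAs (StarModule ℂ (Matrix (Fin n) (Fin n) A))

@[simp] lemma ofM_mul (M N : Matrix (Fin n) (Fin n) A) : ofM (M * N) = ofM M * ofM N := rfl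
@[simp] lemma ofM_star (M : Matrix (Fin n) (Fin n) A) : ofM Mᴴ = star (ofM M) := rfl
@[simp] lemma ofM_symm_mul (M N : CSM n A) : ofM.symm (M * N) = ofM.symm M * ofM.symm N := rfl
@[simp] lemma ofM_symm_star (M : CSM n A) : ofM.symm (star M) = (ofM.symm M)ᴴ := rfl
@[simp] lemma ofM_symm_sub (M N : CSM n A) : ofM.symm (M - N) = ofM.symm M - ofM.symm N := rfl

@[simp] lemma ofM_symm_add (M N : CSM n A) : ofM.symm (M + N) = ofM.symm M + ofM.symm N := rfl

noncomputable instance : NonUnitalCStarAlgebra (CSM n A) :=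
  inferInstanceAs (NonUnitalCStarAlgebra (CStarMatrix (Fin n) (Fin n) A))

@[simp] lemma ofM_symm_neg (M : CSM n A) : ofM.symm (-M) = -(ofM.symm M) := rfl
@[simp] lemma ofM_symm_zero : ofM.symm (0 : CSM n A) = 0 := rfl

lemma diag_conj (X Y : CSM n A) (j : Fin n) :
    ofM.symm (star X * Y * X) j j
      = ∑ i, ∑ k, star (ofM.symm X i j) * ofM.symm Y i k * ofM.symm X k j := by
  simp only [ofM_symm_mul, ofM_symm_star, Matrix.mul_apply, Matrix.conjTranspose_apply,
    Finset.sum_mul]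
  exact Finset.sum_comm

lemma diag_star_mul (X : CSM n A) (j : Fin n) :
    ofM.symm (star X * X) j j = ∑ i, star (ofM.symm X i j) * ofM.symm X i j := by
  simp only [ofM_symm_mul, ofM_symm_star, Matrix.mul_apply, Matrix.conjTranspose_apply]

set_option maxHeartbeats 2000000 in
theorem exists_conj_factor {N : CSM n A} (hN : IsSelfAdjoint N)
    (h : ∀ b : Fin n → A, 0 ≤ ∑ i, ∑ k, star (b i) * ofM.symm N i k * b k) :
    ∃ B : Matrix (Fin n) (Fin n) A, ofM.symm N = Bᴴ * B := by
  classical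
  set S := quasispectrum ℝ N with hS
  set g : ℝ → ℝ := fun x => (-x) ⊔ 0 with hgdef
  have hgc : ∀ (s : Set ℝ), ContinuousOn g s :=
    fun s => (continuous_neg.max continuous_const).continuousOn
  have hg0 : g 0 = 0 := by simp [hgdef]
  have hgnn : ∀ x, 0 ≤ g x := fun x => le_max_right _ _
  set c : ℝ → ℝ := fun x => g x * Real.sqrt (g x) with hcdef
  have hcc : ∀ (s : Set ℝ), ContinuousOn c s := fun s =>
    (((continuous_neg.max continuous_const).mul
      (Real.continuous_sqrt.comp (continuous_neg.max continuous_const)))).continuousOn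
  have hc0 : c 0 = 0 := by simp [hcdef, hg0]
  set Q := cfcₙ g N with hQdef
  set C := cfcₙ c N with hCdef
  have hQsa : IsSelfAdjoint Q := cfcₙ_predicate g N
  have hCsa : IsSelfAdjoint C := cfcₙ_predicate c N
  -- `Q * N * Q = -(C * C)`
  have e1 : Q * N * Q = -(C * C) := by
    have m1 : cfcₙ (fun x : ℝ => x * g x) N = N * Q := by
      rw [cfcₙ_mul _ _ N (continuous_id'.continuousOn) rfl (hgc _) hg0, cfcₙ_id' ℝ N hN]
    have m2 : cfcₙ (fun x : ℝ => g x * (x * g x)) N = Q * (N * Q) := by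
      rw [cfcₙ_mul g (fun x : ℝ => x * g x) N (hgc _) hg0
        ((continuous_id'.mul (continuous_neg.max continuous_const)).continuousOn) (by simp [hg0]),
        m1]
    have m3 : cfcₙ (fun x : ℝ => c x * c x) N = C * C := by
      rw [cfcₙ_mul _ _ N (hcc _) hc0 (hcc _) hc0]
    have key : (fun x : ℝ => g x * (x * g x)) = fun x : ℝ => -(c x * c x) := by
      funext x
      have h1 : Real.sqrt (g x) * Real.sqrt (g x) = g x := Real.mul_self_sqrt (hgnn x)
      have h2 : g x * x = -(g x * g x) := by
        rcases le_total x 0 with hx | hx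
        · have : g x = -x := by simp [hgdef, max_eq_left, neg_nonneg.mpr hx]
          rw [this]; ring
        · have : g x = 0 := by simp [hgdef, max_eq_right, neg_nonpos.mpr hx]
          rw [this]; ring
      calc g x * (x * g x) = (g x * x) * g x := by ring
        _ = -(g x * g x) * g x := by rw [h2]
        _ = -(c x * c x) := by simp only [hcdef]; nlinarith [h1]
    rw [← mul_assoc] at m2
    rw [← m2, key, cfcₙ_neg _ _, m3]
  -- diagonal entries of `C` vanish
  have hC : C = 0 := by
    have hdiag : ∀ j, ∑ i, star (ofM.symm C i j) * ofM.symm C i j = 0 := by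
      intro j
      have h1 : 0 ≤ ofM.symm (star Q * N * Q) j j := by
        rw [diag_conj]
        exact h _
      rw [hQsa.star_eq, e1] at h1
      have h2 : ofM.symm (-(C * C)) j j = -(ofM.symm (star C * C) j j) := by
        rw [hCsa.star_eq, ofM_symm_neg]
        rfl
      rw [h2, diag_star_mul] at h1
      have h3 : 0 ≤ ∑ i, star (ofM.symm C i j) * ofM.symm C i j :=
        Finset.sum_nonneg fun i _ => star_mul_self_nonneg _
      exact le_antisymm (neg_nonneg.mp h1) h3
    have hent : ∀ i j, ofM.symm C i j = 0 := by
      intro i j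
      have h4 := (Finset.sum_eq_zero_iff_of_nonneg
        (fun i _ => star_mul_self_nonneg (ofM.symm C i j))).mp (hdiag j) i (Finset.mem_univ i)
      exact (CStarRing.star_mul_self_eq_zero_iff _).mp h4
    apply ofM.symm.injective
    ext i j
    exact hent i j
  -- `Q = 0`
  have hQ : Q = 0 := by
    have m3 : cfcₙ (fun x : ℝ => c x * c x) N = C * C := by
      rw [cfcₙ_mul _ _ N (hcc _) hc0 (hcc _) hc0]
    have m4 : cfcₙ (fun x : ℝ => c x * c x * g x) N = (C * C) * Q := by
      rw [cfcₙ_mul (fun x : ℝ => c x * c x) g N (((hcc Set.univ).mono (Set.subset_univ _)).mul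
        ((hcc Set.univ).mono (Set.subset_univ _))) (by simp [hc0]) (hgc _) hg0, m3]
    have m5 : cfcₙ (fun x : ℝ => (g x * g x) * (g x * g x)) N = (Q * Q) * (Q * Q) := by
      rw [cfcₙ_mul (fun x : ℝ => g x * g x) (fun x : ℝ => g x * g x) N (((hgc Set.univ).mono (Set.subset_univ _)).mul
        ((hgc Set.univ).mono (Set.subset_univ _))) (by simp [hg0])
        (((hgc Set.univ).mono (Set.subset_univ _)).mul
        ((hgc Set.univ).mono (Set.subset_univ _))) (by simp [hg0]),
        cfcₙ_mul _ _ N (hgc _) hg0 (hgc _) hg0]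
    have keyf : (fun x : ℝ => (g x * g x) * (g x * g x)) = fun x : ℝ => c x * c x * g x := by
      funext x
      have h1 : Real.sqrt (g x) * Real.sqrt (g x) = g x := Real.mul_self_sqrt (hgnn x)
      simp only [hcdef]
      rw [show g x * Real.sqrt (g x) * (g x * Real.sqrt (g x)) * g x
          = Real.sqrt (g x) * Real.sqrt (g x) * (g x * (g x * g x)) from by ring, h1]
      ring
    have hQQ4 : (Q * Q) * (Q * Q) = 0 := by
      rw [← m5, keyf, m4, hC]
      simp
    have hQQsa : star (Q * Q) = Q * Q := by
      rw [StarMul.star_mul, hQsa.star_eq]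
    have hQQ : Q * Q = 0 := by
      have : ‖Q * Q‖ * ‖Q * Q‖ = 0 := by
        rw [← CStarRing.norm_star_mul_self, hQQsa, hQQ4, norm_zero]
      rcases mul_self_eq_zero.mp this with h'
      exact norm_eq_zero.mp h'
    have : ‖Q‖ * ‖Q‖ = 0 := by
      rw [← CStarRing.norm_star_mul_self, hQsa.star_eq, hQQ, norm_zero]
    exact norm_eq_zero.mp (mul_self_eq_zero.mp this)
  -- conclude:  `N = star B * B` with `B = cfcₙ (√(x ⊔ 0)) N`
  set f : ℝ → ℝ := fun x => x ⊔ 0 with hfdef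
  have hfc : ∀ (s : Set ℝ), ContinuousOn f s :=
    fun s => (continuous_id'.max continuous_const).continuousOn
  have hf0 : f 0 = 0 := by simp [hfdef]
  set bf : ℝ → ℝ := fun x => Real.sqrt (f x) with hbdef
  have hbc : ∀ (s : Set ℝ), ContinuousOn bf s := fun s =>
    (Real.continuous_sqrt.comp (continuous_id'.max continuous_const)).continuousOn
  have hb0 : bf 0 = 0 := by simp [hbdef, hf0]
  set B := cfcₙ bf N with hBdef
  have hBsa : IsSelfAdjoint B := cfcₙ_predicate bf N
  have hBB : B * B = cfcₙ f N := by
    rw [← cfcₙ_mul _ _ N (hbc _) hb0 (hbc _) hb0]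
    apply cfcₙ_congr
    intro x _
    exact Real.mul_self_sqrt (le_max_right _ _)
  have hfN : cfcₙ f N = N + Q := by
    have : cfcₙ (fun x : ℝ => x + g x) N = N + Q := by
      rw [cfcₙ_add _ _ N (continuous_id'.continuousOn) rfl (hgc _) hg0, cfcₙ_id' ℝ N hN]
    rw [← this]
    apply cfcₙ_congr
    intro x _
    simp only [hfdef, hgdef]
    rcases le_total x 0 with hx | hx
    · rw [max_eq_right hx, max_eq_left (by linarith)]; ring
    · rw [max_eq_left hx, max_eq_right (by linarith)]; ring
  have hNB : N = star B * B := by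
    rw [hBsa.star_eq, hBB, hfN, hQ, add_zero]
  refine ⟨ofM.symm B, ?_⟩
  rw [hNB]
  rfl

end CSM

section Glue

lemma aux_shift (M : Matrix (Fin n) (Fin n) A) (m : Fin n) (a : Fin n → A)
    (ha : ∑ i, a i = 0) :
    ∑ i, ∑ j, star (a i) * (M i j - M i m - M m j + M m m) * a j
      = ∑ i, ∑ j, star (a i) * M i j * a j := by
  have hstar : ∑ i, star (a i) = 0 := by rw [← star_sum, ha, star_zero]
  have expand : ∀ i j, star (a i) * (M i j - M i m - M m j + M m m) * a j
      = star (a i) * M i j * a j - (star (a i) * M i m) * a j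
        - star (a i) * (M m j * a j) + star (a i) * (M m m * a j) := by
    intro i j
    noncomm_ring
  simp only [expand]
  simp only [Finset.sum_add_distrib, Finset.sum_sub_distrib]
  have T2 : ∑ i, ∑ j, (star (a i) * M i m) * a j = 0 := by
    refine Finset.sum_eq_zero fun i _ => ?_
    rw [← Finset.mul_sum, ha, mul_zero]
  have T3 : ∑ i, ∑ j, star (a i) * (M m j * a j) = 0 := by
    rw [Finset.sum_comm]
    refine Finset.sum_eq_zero fun j _ => ?_
    rw [← Finset.sum_mul, hstar, zero_mul]
  have T4 : ∑ i, ∑ j, star (a i) * (M m m * a j) = 0 := by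
    refine Finset.sum_eq_zero fun i _ => ?_
    rw [← Finset.mul_sum, ← Finset.mul_sum, ha, mul_zero, mul_zero]
  rw [T2, T3, T4]
  simp

lemma factor_sum (B : Matrix (Fin n) (Fin n) A) (a : Fin n → A) :
    ∑ i, ∑ j, star (a i) * (Bᴴ * B) i j * a j
      = ∑ l, star (∑ i, B l i * a i) * (∑ j, B l j * a j) := by
  have e : ∀ l, star (∑ i, B l i * a i) * (∑ j, B l j * a j)
      = ∑ i, ∑ j, star (a i) * (star (B l i) * (B l j * a j)) := by
    intro l
    rw [star_sum, Finset.sum_mul]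
    refine Finset.sum_congr rfl fun i _ => ?_
    rw [Finset.mul_sum]
    refine Finset.sum_congr rfl fun j _ => ?_
    rw [StarMul.star_mul]
    noncomm_ring
  calc ∑ i, ∑ j, star (a i) * (Bᴴ * B) i j * a j
      = ∑ i, ∑ j, ∑ l, star (a i) * (star (B l i) * (B l j * a j)) := by
        refine Finset.sum_congr rfl fun i _ => Finset.sum_congr rfl fun j _ => ?_
        rw [Matrix.mul_apply]
        simp only [Matrix.conjTranspose_apply]
        rw [Finset.mul_sum, Finset.sum_mul]
        refine Finset.sum_congr rfl fun l _ => ?_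
        noncomm_ring
    _ = ∑ l, ∑ i, ∑ j, star (a i) * (star (B l i) * (B l j * a j)) :=
        (Finset.sum_congr rfl fun i _ => Finset.sum_comm).trans Finset.sum_comm
    _ = ∑ l, star (∑ i, B l i * a i) * (∑ j, B l j * a j) :=
        Finset.sum_congr rfl fun l _ => (e l).symm

end Glue
end CondPosAux


open CondPosAux CondPosAux.CSM

/-- A hermitian matrix `[aᵢⱼ] ∈ Mₙ(A)` (`n ≥ 2`) is conditionally positive iff the matrix
`[aᵢⱼ − aᵢₘ − aₘⱼ + aₘₘ]` is a positive element of `Mₙ(A)` for some index `m`. -/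
theorem matrix_condPos_iff_shift_posElem {A : Type*} {n : ℕ} (hn : 2 ≤ n)
    [NonUnitalCStarAlgebra A] [PartialOrder A] [StarOrderedRing A]
    (M : Matrix (Fin n) (Fin n) A) (hM : Mᴴ = M) :
    M.IsCondPos ↔
      ∃ m : Fin n, Matrix.IsPosElem (Matrix.of fun i j => M i j - M i m - M m j + M m m) := by
  have hstar : ∀ i j, star (M j i) = M i j := by
    intro i j
    rw [← hM, Matrix.conjTranspose_apply, hM, star_star]
  constructor
  · intro h
    have hm : (0 : ℕ) < n := by omega
    set m : Fin n := ⟨0, hm⟩ with hmdef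
    set N' : Matrix (Fin n) (Fin n) A :=
      Matrix.of (fun i j => M i j - M i m - M m j + M m m) with hN'
    refine ⟨m, ?_⟩
    have hNsym : N'ᴴ = N' := by
      ext i j
      simp only [hN', Matrix.conjTranspose_apply, Matrix.of_apply, star_add, star_sub, hstar]
      abel
    have hsa : IsSelfAdjoint (ofM N') := by
      show star (ofM N') = ofM N'
      rw [← ofM_star, hNsym]
    have hvec : ∀ b : Fin n → A, 0 ≤ ∑ i, ∑ k, star (b i) * ofM.symm (ofM N') i k * b k := by
      intro b
      classical
      set a : Fin n → A := b - Pi.single m (∑ j, b j) with hadef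
      have hsum : ∑ i, a i = 0 := by
        simp only [hadef, Pi.sub_apply, Finset.sum_sub_distrib]
        rw [Finset.sum_pi_single']
        simp
      have h1 := h a hsum
      rw [← aux_shift M m a hsum] at h1
      have hrow : ∀ k, M m k - M m m - M m k + M m m = 0 := fun k => by abel
      have hcol : ∀ i, M i m - M i m - M m m + M m m = 0 := fun i => by abel
      have heq : ∑ i, ∑ k, star (a i) * (M i k - M i m - M m k + M m m) * a k
          = ∑ i, ∑ k, star (b i) * (M i k - M i m - M m k + M m m) * b k := by
        refine Finset.sum_congr rfl fun i _ => Finset.sum_congr rfl fun k _ => ?_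
        by_cases him : i = m
        · subst him
          rw [hrow k, mul_zero, zero_mul, mul_zero, zero_mul]
        · by_cases hkm : k = m
          · subst hkm
            rw [hcol i, mul_zero, zero_mul, mul_zero, zero_mul]
          · have hai : a i = b i := by
              simp [hadef, Pi.single_eq_of_ne him]
            have hak : a k = b k := by
              simp [hadef, Pi.single_eq_of_ne hkm]
            rw [hai, hak]
      rw [heq] at h1
      exact h1
    obtain ⟨B, hB⟩ := exists_conj_factor hsa hvec
    exact ⟨B, hB⟩
  · rintro ⟨m, B, hB⟩
    intro a ha
    rw [← aux_shift M m a ha]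
    have key : ∑ i, ∑ j, star (a i) * (M i j - M i m - M m j + M m m) * a j
        = ∑ i, ∑ j, star (a i) * (Bᴴ * B) i j * a j := by
      refine Finset.sum_congr rfl fun i _ => Finset.sum_congr rfl fun j _ => ?_
      rw [show M i j - M i m - M m j + M m m = (Bᴴ * B) i j from by rw [← hB]; rfl]
    rw [key, factor_sum]
    exact Finset.sum_nonneg fun l _ => star_mul_self_nonneg _
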